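/- arXiv:1704.02764 — 2 statements merged into one kernel-verified Lean document; each statement's English description precedes it below -/
import Mathlib

section
/- Let $\mu = \sum_i \phi_i \delta_{X_i}$ be a purely atomic probability measure on the unit square $Q_1 = [-1/2,1/2]^2$ (viewed as the flat torus $\mathbb{R}^2/\mathbb{Z}^2$) with $\phi_i > 0$ and $\sum_i \phi_i = 1$. Then there is a universal constant $c>0$ such that $\left(\sum_i \phi_i^{1/2}\right)^{2/3} \left(W_2^2(\mu, dx')\right)^{1/3} \ge c$, where $dx'$ is the Lebesgue measure on $Q_1$ and $W_2$ is the 2-Wasserstein distance. -/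
open MeasureTheory

/-- Squared 2-Wasserstein "distance" between two measures on a metric measurable space,
defined as the infimum of the quadratic transport cost over all couplings. -/
noncomputable def W2sq {α : Type*} [MeasurableSpace α] [PseudoMetricSpace α]
    (μ ν : Measure α) : ℝ :=
  sInf {c : ℝ | ∃ π : Measure (α × α), π.map Prod.fst = μ ∧ π.map Prod.snd = ν ∧
      c = ∫ p, dist p.1 p.2 ^ 2 ∂π}

open Metric Set ENNReal

noncomputable abbrev T2 := AddCircle (1 : ℝ) × AddCircle (1 : ℝ)

instance : MeasurableSingletonClass T2 :=
  @OpensMeasurableSpace.toMeasurableSingletonClass T2 _ _ _ _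

instance : BorelSpace (T2 × T2) := Prod.borelSpace

instance : OpensMeasurableSpace (T2 × T2) := BorelSpace.opensMeasurable


lemma tsum_rpow_half {ι : Type*} (f : ι → ℝ≥0∞) :
    (∑' i, f i) ^ ((1:ℝ)/2) ≤ ∑' i, (f i) ^ ((1:ℝ)/2) := by
  set L := ∑' i, (f i) ^ ((1:ℝ)/2) with hL
  have key : ∑' i, f i ≤ L ^ (2:ℝ) := by
    have h1 : ∀ i, f i ≤ (f i) ^ ((1:ℝ)/2) * L := by
      intro i
      have h2 : f i = (f i)^((1:ℝ)/2) * (f i)^((1:ℝ)/2) := by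
        rw [← ENNReal.rpow_add_of_nonneg ((1:ℝ)/2) ((1:ℝ)/2) (by norm_num) (by norm_num)]
        norm_num
      nth_rewrite 1 [h2]
      exact mul_le_mul_right (ENNReal.le_tsum i) _
    calc ∑' i, f i ≤ ∑' i, (f i)^((1:ℝ)/2) * L := ENNReal.tsum_le_tsum h1
      _ = L * L := by rw [ENNReal.tsum_mul_right]
      _ = L ^ (2:ℝ) := by
          rw [show ((2:ℝ)) = ((2:ℕ):ℝ) by norm_num, ENNReal.rpow_natCast, pow_two]
  calc (∑' i, f i) ^ ((1:ℝ)/2) ≤ (L ^ (2:ℝ)) ^ ((1:ℝ)/2) :=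
        ENNReal.rpow_le_rpow key (by norm_num)
    _ = L := by rw [← ENNReal.rpow_mul]; norm_num

lemma fiber_lower (a : T2) (ν : Measure T2) (hν : ν ≤ volume) :
    (ν univ) ^ (2:ℝ) ≤ 16 * ∫⁻ y, ENNReal.ofReal (dist a y ^ 2) ∂ν := by
  have hνs : ∀ s, ν s ≤ volume s := fun s => Measure.le_iff'.1 hν s
  have hfin : ν univ ≠ ⊤ := by
    refine ne_top_of_le_ne_top ?_ (hνs univ)
    simp [← Set.univ_prod_univ, Measure.volume_eq_prod, Measure.prod_prod,
      AddCircle.measure_univ]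
  set mr := (ν univ).toReal with hmr
  have hmr0 : 0 ≤ mr := ENNReal.toReal_nonneg
  have hm : ν univ = ENNReal.ofReal mr := (ENNReal.ofReal_toReal hfin).symm
  set r := Real.sqrt (mr/8) with hrdef
  have hr0 : 0 ≤ r := Real.sqrt_nonneg _
  have hr2 : r^2 = mr/8 := Real.sq_sqrt (by positivity)
  set cB := closedBall a r with hcB
  have hmeas : Measurable fun y : T2 => ENNReal.ofReal (dist a y ^ 2) :=
    (((continuous_const.dist continuous_id).pow 2).measurable).ennreal_ofReal
  have hvolcb : volume cB ≤ ENNReal.ofReal (mr/2) := by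
    calc volume cB = volume (closedBall a.1 r) * volume (closedBall a.2 r) := by
          rw [hcB, ← closedBall_prod_same, Measure.volume_eq_prod, Measure.prod_prod]
      _ ≤ ENNReal.ofReal (2*r) * ENNReal.ofReal (2*r) := by
          rw [AddCircle.volume_closedBall, AddCircle.volume_closedBall]
          exact mul_le_mul' (ENNReal.ofReal_le_ofReal (min_le_right _ _))
            (ENNReal.ofReal_le_ofReal (min_le_right _ _))
      _ = ENNReal.ofReal (mr/2) := by
          rw [← ENNReal.ofReal_mul (by positivity)]
          congr 1
          have h4 : (2*r) * (2*r) = 4 * r^2 := by ring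
          rw [h4, hr2]; ring
  have hcompl : ENNReal.ofReal (mr/2) ≤ ν cBᶜ := by
    have h1 : ν cBᶜ = ν univ - ν cB := measure_compl measurableSet_closedBall
      (ne_top_of_le_ne_top hfin (measure_mono (subset_univ _)))
    have h2 : ν cB ≤ ENNReal.ofReal (mr/2) := le_trans (hνs cB) hvolcb
    rw [h1, hm]
    calc ENNReal.ofReal (mr/2) = ENNReal.ofReal mr - ENNReal.ofReal (mr/2) := by
          rw [← ENNReal.ofReal_sub _ (by positivity)]; congr 1; ring
      _ ≤ ENNReal.ofReal mr - ν cB := tsub_le_tsub_left h2 _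
  have hmono : ENNReal.ofReal (r^2) * ν cBᶜ ≤ ∫⁻ y, ENNReal.ofReal (dist a y ^ 2) ∂ν := by
    rw [← setLIntegral_const cBᶜ]
    refine le_trans (setLIntegral_mono hmeas ?_) (setLIntegral_le_lintegral _ _)
    intro y hy
    apply ENNReal.ofReal_le_ofReal
    have hd : r < dist a y := by
      simp only [hcB, mem_compl_iff, mem_closedBall, not_le, dist_comm] at hy
      exact hy
    exact pow_le_pow_left₀ hr0 hd.le 2
  calc (ν univ) ^ (2:ℝ) = ENNReal.ofReal (mr^2) := by
        rw [hm, ENNReal.ofReal_rpow_of_nonneg hmr0 (by norm_num)]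
        congr 1
        rw [show ((2:ℝ)) = ((2:ℕ):ℝ) by norm_num, Real.rpow_natCast]
    _ = 16 * ENNReal.ofReal (mr/8 * (mr/2)) := by
        rw [show (16:ℝ≥0∞) = ENNReal.ofReal 16 by norm_num,
          ← ENNReal.ofReal_mul (by norm_num)]
        congr 1; ring
    _ ≤ 16 * (ENNReal.ofReal (r^2) * ν cBᶜ) := by
        refine mul_le_mul_right ?_ 16
        rw [ENNReal.ofReal_mul (by positivity), hr2]
        exact mul_le_mul_right hcompl _
    _ ≤ 16 * ∫⁻ y, ENNReal.ofReal (dist a y ^ 2) ∂ν := mul_le_mul_right hmono 16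

lemma coupling_lb (φ : ℕ → ℝ) (X : ℕ → T2) (hφ : ∀ i, 0 < φ i) (hsum : HasSum φ 1)
    (π : Measure (T2 × T2))
    (hfst : π.map Prod.fst = Measure.sum (fun i => ENNReal.ofReal (φ i) • Measure.dirac (X i)))
    (hsnd : π.map Prod.snd = volume) (C : ℝ) (hC : C = ∫ p, dist p.1 p.2 ^ 2 ∂π) :
    ENNReal.ofReal (φ 0 ^ 2) ≤ 16 * ENNReal.ofReal C ∧
    1 ≤ 16 * (∑' i, ENNReal.ofReal (Real.sqrt (φ i))) ^ (2:ℝ) * ENNReal.ofReal C := by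
  set μ : Measure T2 := Measure.sum (fun i => ENNReal.ofReal (φ i) • Measure.dirac (X i)) with hμ
  have hμs : ∀ s : Set T2, MeasurableSet s →
      μ s = ∑' i, ENNReal.ofReal (φ i) * s.indicator 1 (X i) := by
    intro s hs
    rw [hμ, Measure.sum_apply _ hs]
    simp [Measure.smul_apply, Measure.dirac_apply' _ hs]
  have hμuniv : μ univ = 1 := by
    rw [hμs univ MeasurableSet.univ]
    simp only [indicator_univ, Pi.one_apply, mul_one]
    rw [← ENNReal.ofReal_tsum_of_nonneg (fun i => (hφ i).le) hsum.summable, hsum.tsum_eq]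
    norm_num
  set A : Set T2 := Set.range X with hA
  have hAc : A.Countable := countable_range X
  have hAm : MeasurableSet A := hAc.measurableSet
  haveI : Countable ↥A := hAc.to_subtype
  set m : T2 → ℝ≥0∞ := fun a => μ {a} with hm
  have hm1 : ∀ a, m a ≤ 1 := fun a => (measure_mono (subset_univ _)).trans_eq hμuniv
  have hμAc : μ Aᶜ = 0 := by
    rw [hμs _ hAm.compl]
    have : ∀ i, Aᶜ.indicator (1 : T2 → ℝ≥0∞) (X i) = 0 := fun i =>
      indicator_of_notMem (by simp [hA]) 1
    simp [this]
  have hres : μ.restrict A = μ := Measure.restrict_eq_self_of_ae_mem (by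
    rw [MeasureTheory.ae_iff]
    exact hμAc)
  have hμA : μ A = 1 := by
    have := measure_add_measure_compl (μ := μ) hAm
    rw [hμAc, add_zero] at this
    rw [this, hμuniv]
  have hcount : ∀ g : T2 → ℝ≥0∞, ∫⁻ x, g x ∂μ = ∑' a : ↥A, g ↑a * μ {↑a} := by
    intro g
    rw [← lintegral_countable g hAc]
    conv_lhs => rw [← hres]
  have hsum_m : ∑' a : ↥A, m ↑a = 1 := by
    have h := hcount (fun _ => 1)
    simpa [lintegral_const, hμuniv] using h.symm
  set S := ∑' i, ENNReal.ofReal (Real.sqrt (φ i)) with hS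
  set U := ∑' a : ↥A, (m ↑a) ^ ((1:ℝ)/2) with hU_def
  set V := ∑' a : ↥A, (m ↑a) ^ (2:ℝ) with hV_def
  have hma : ∀ a : ↥A, m ↑a = ∑' i, ENNReal.ofReal (φ i) *
      ({(↑a : T2)} : Set T2).indicator 1 (X i) := fun a =>
    hμs {(↑a : T2)} (measurableSet_singleton _)
  have hU : U ≤ S := by
    have step1 : U ≤ ∑' (a : ↥A) (i : ℕ),
        (ENNReal.ofReal (φ i) * ({(↑a : T2)} : Set T2).indicator 1 (X i)) ^ ((1:ℝ)/2) := by
      refine ENNReal.tsum_le_tsum fun a => ?_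
      rw [hma a]
      exact tsum_rpow_half _
    refine step1.trans ?_
    rw [ENNReal.tsum_comm]
    refine le_of_eq (tsum_congr fun i => ?_)
    have hXmem : X i ∈ A := Set.mem_range_self i
    rw [tsum_eq_single (⟨X i, hXmem⟩ : ↥A) ?side]
    · simp only [Set.indicator_of_mem (mem_singleton (X i)), Pi.one_apply, mul_one]
      rw [ENNReal.ofReal_rpow_of_nonneg (hφ i).le (by norm_num), Real.sqrt_eq_rpow]
    case side =>
      intro b hb
      have hbne : X i ∉ ({(↑b : T2)} : Set T2) := by
        simp only [mem_singleton_iff]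
        intro h
        exact hb (Subtype.ext h.symm)
      rw [indicator_of_notMem hbne, mul_zero, ENNReal.zero_rpow_of_pos (by norm_num)]
  have hHolder : (1:ℝ≥0∞) ≤ U ^ ((2:ℝ)/3) * V ^ ((1:ℝ)/3) := by
    have hconj : Real.HolderConjugate ((3:ℝ)/2) 3 := ⟨by norm_num, by norm_num, by norm_num⟩
    have hH := ENNReal.lintegral_mul_le_Lp_mul_Lq (Measure.count : Measure ↥A) hconj
      (f := fun a => (m ↑a) ^ ((1:ℝ)/3)) (g := fun a => (m ↑a) ^ ((2:ℝ)/3))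
      (measurable_of_countable _).aemeasurable (measurable_of_countable _).aemeasurable
    simp only [Pi.mul_apply, lintegral_count] at hH
    have e1 : ∀ a : ↥A, ((m ↑a)^((1:ℝ)/3)) * ((m ↑a)^((2:ℝ)/3)) = m ↑a := by
      intro a
      rw [← ENNReal.rpow_add_of_nonneg _ _ (by norm_num) (by norm_num)]
      norm_num
    have e2 : ∀ a : ↥A, ((m ↑a)^((1:ℝ)/3))^((3:ℝ)/2) = (m ↑a)^((1:ℝ)/2) := by
      intro a; rw [← ENNReal.rpow_mul]; norm_num
    have e3 : ∀ a : ↥A, ((m ↑a)^((2:ℝ)/3))^((3:ℝ)) = (m ↑a)^(2:ℝ) := by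
      intro a; rw [← ENNReal.rpow_mul]; norm_num
    simp only [e1, e2, e3] at hH
    rw [hsum_m] at hH
    convert hH using 2 <;> norm_num [hU_def]
  -- cost side
  have hprob : π univ = 1 := by
    have h : π.map Prod.fst univ = π univ := by
      rw [Measure.map_apply measurable_fst MeasurableSet.univ, Set.preimage_univ]
    rw [hfst] at h
    rw [← h, hμuniv]
  have hdistmeas : Measurable fun p : T2 × T2 => ENNReal.ofReal (dist p.1 p.2 ^ 2) :=
    (((continuous_fst.dist continuous_snd).pow 2).measurable).ennreal_ofReal
  set I := ∫⁻ p : T2 × T2, ENNReal.ofReal (dist p.1 p.2 ^ 2) ∂π with hI_def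
  have hπa : ∀ a : ↥A, π (({(↑a : T2)} : Set T2) ×ˢ univ) = m ↑a := by
    intro a
    rw [prod_univ, ← Measure.map_apply measurable_fst (measurableSet_singleton _), hfst]
  set ν : ↥A → Measure T2 := fun a => (π.restrict (({(↑a : T2)} : Set T2) ×ˢ univ)).map Prod.snd
    with hν_def
  have hsmeas : ∀ a : ↥A, MeasurableSet ((({(↑a : T2)} : Set T2)) ×ˢ (univ : Set T2)) :=
    fun a => (measurableSet_singleton _).prod MeasurableSet.univ
  have hνle : ∀ a : ↥A, ν a ≤ volume := by
    intro a
    rw [Measure.le_iff]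
    intro s hs
    rw [hν_def, Measure.map_apply measurable_snd hs,
      Measure.restrict_apply (measurable_snd hs)]
    calc π (Prod.snd ⁻¹' s ∩ _) ≤ π (Prod.snd ⁻¹' s) := measure_mono (inter_subset_left)
      _ = volume s := by rw [← Measure.map_apply measurable_snd hs, hsnd]
  have hνuniv : ∀ a : ↥A, ν a univ = m ↑a := by
    intro a
    rw [hν_def, Measure.map_apply measurable_snd MeasurableSet.univ, Set.preimage_univ,
      Measure.restrict_apply MeasurableSet.univ, univ_inter, hπa]
  have hfiber : ∀ a : ↥A, ∫⁻ p in (({(↑a : T2)} : Set T2) ×ˢ univ),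
      ENNReal.ofReal (dist p.1 p.2 ^ 2) ∂π = ∫⁻ y, ENNReal.ofReal (dist (↑a : T2) y ^ 2) ∂(ν a) := by
    intro a
    have hmeas' : Measurable fun y : T2 => ENNReal.ofReal (dist (↑a : T2) y ^ 2) :=
      (((continuous_const.dist continuous_id).pow 2).measurable).ennreal_ofReal
    rw [hν_def]
    dsimp only
    rw [lintegral_map hmeas' measurable_snd]
    refine setLIntegral_congr_fun (hsmeas a) ?_
    rintro ⟨p1, p2⟩ hp
    simp only [mem_prod, mem_singleton_iff] at hp
    rw [hp.1]
  have hdisj : Pairwise (Function.onFun Disjoint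
      fun a : ↥A => (({(↑a : T2)} : Set T2) ×ˢ (univ : Set T2))) := by
    intro a b hab
    rw [Function.onFun]
    rw [Set.disjoint_left]
    rintro ⟨p1, p2⟩ hp hq
    simp only [mem_prod, mem_singleton_iff] at hp hq
    exact hab (Subtype.ext (hp.1 ▸ hq.1 ▸ rfl))
  have hVI : V ≤ 16 * I := by
    have h1 : ∀ a : ↥A, (m ↑a) ^ (2:ℝ) ≤
        16 * ∫⁻ y, ENNReal.ofReal (dist (↑a : T2) y ^ 2) ∂(ν a) := by
      intro a
      have := fiber_lower (↑a) (ν a) (hνle a)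
      rwa [hνuniv a] at this
    calc V ≤ ∑' a : ↥A, 16 * ∫⁻ y, ENNReal.ofReal (dist (↑a : T2) y ^ 2) ∂(ν a) :=
          ENNReal.tsum_le_tsum h1
      _ = 16 * ∑' a : ↥A, ∫⁻ p in (({(↑a : T2)} : Set T2) ×ˢ univ),
          ENNReal.ofReal (dist p.1 p.2 ^ 2) ∂π := by
          rw [ENNReal.tsum_mul_left]
          congr 1
          exact tsum_congr fun a => (hfiber a).symm
      _ = 16 * ∫⁻ p in ⋃ a : ↥A, (({(↑a : T2)} : Set T2) ×ˢ univ),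
          ENNReal.ofReal (dist p.1 p.2 ^ 2) ∂π := by
          rw [lintegral_iUnion hsmeas hdisj]
      _ ≤ 16 * I := by
          refine mul_le_mul_right ?_ 16
          exact setLIntegral_le_lintegral _ _
  -- relate C to I
  haveI : IsProbabilityMeasure π := ⟨hprob⟩
  have hbound : ∀ p : T2 × T2, dist p.1 p.2 ≤ 1 := by
    rintro ⟨p, q⟩
    rw [Prod.dist_eq]
    have h1 : dist p.1 q.1 ≤ 1 := by
      rw [dist_eq_norm]
      refine (AddCircle.norm_le_half_period 1 one_ne_zero).trans (by norm_num)
    have h2 : dist p.2 q.2 ≤ 1 := by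
      rw [dist_eq_norm]
      refine (AddCircle.norm_le_half_period 1 one_ne_zero).trans (by norm_num)
    exact max_le h1 h2
  have hint : Integrable (fun p : T2 × T2 => dist p.1 p.2 ^ 2) π := by
    refine Integrable.mono' (integrable_const 1)
      (((continuous_fst.dist continuous_snd).pow 2).aestronglyMeasurable)
      (ae_of_all _ fun p => ?_)
    rw [Real.norm_eq_abs, abs_of_nonneg (sq_nonneg _)]
    calc dist p.1 p.2 ^ 2 ≤ 1 ^ 2 := pow_le_pow_left₀ dist_nonneg (hbound p) 2
      _ = 1 := one_pow 2
  have hCI : ENNReal.ofReal C = I := by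
    rw [hC, hI_def]
    exact ofReal_integral_eq_lintegral_ofReal hint (ae_of_all _ fun p => sq_nonneg _)
  constructor
  · -- first conclusion
    have h0 : ENNReal.ofReal (φ 0) ≤ m (X 0) := by
      have := hμs {X 0} (measurableSet_singleton _)
      rw [hm]
      dsimp only
      rw [this]
      have hterm : ENNReal.ofReal (φ 0) * ({X 0} : Set T2).indicator 1 (X 0)
          = ENNReal.ofReal (φ 0) := by
        rw [indicator_of_mem (mem_singleton (X 0))]
        simp
      calc ENNReal.ofReal (φ 0) = ENNReal.ofReal (φ 0) *
            ({X 0} : Set T2).indicator 1 (X 0) := hterm.symm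
        _ ≤ _ := ENNReal.le_tsum 0
    have h1 : ENNReal.ofReal (φ 0 ^ 2) ≤ (m (X 0)) ^ (2:ℝ) := by
      have : ENNReal.ofReal (φ 0) ^ (2:ℝ) ≤ (m (X 0)) ^ (2:ℝ) :=
        ENNReal.rpow_le_rpow h0 (by norm_num)
      rwa [ENNReal.ofReal_rpow_of_nonneg (hφ 0).le (by norm_num),
        show ((2:ℝ)) = ((2:ℕ):ℝ) by norm_num, Real.rpow_natCast] at this
    have h2 : (m (X 0)) ^ (2:ℝ) ≤ V := by
      rw [hV_def]
      exact ENNReal.le_tsum (⟨X 0, Set.mem_range_self 0⟩ : ↥A)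
    calc ENNReal.ofReal (φ 0 ^ 2) ≤ V := h1.trans h2
      _ ≤ 16 * I := hVI
      _ = 16 * ENNReal.ofReal C := by rw [hCI]
  · -- second conclusion
    have hcube : (1:ℝ≥0∞) ≤ U ^ (2:ℝ) * V := by
      have h3 := ENNReal.rpow_le_rpow hHolder (show (0:ℝ) ≤ 3 by norm_num)
      rw [ENNReal.one_rpow, ENNReal.mul_rpow_of_nonneg _ _ (by norm_num : (0:ℝ) ≤ 3),
        ← ENNReal.rpow_mul, ← ENNReal.rpow_mul] at h3
      norm_num at h3
      rwa [show U ^ (2:ℝ) = U ^ (2:ℕ) by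
        rw [show ((2:ℝ)) = ((2:ℕ):ℝ) by norm_num, ENNReal.rpow_natCast]]
    have hfinal : (1:ℝ≥0∞) ≤ S ^ (2:ℝ) * (16 * ENNReal.ofReal C) := by
      refine hcube.trans ?_
      refine mul_le_mul' (ENNReal.rpow_le_rpow hU (by norm_num)) ?_
      rw [hCI]
      exact hVI
    calc (1:ℝ≥0∞) ≤ S ^ (2:ℝ) * (16 * ENNReal.ofReal C) := hfinal
      _ = 16 * S ^ (2:ℝ) * ENNReal.ofReal C := by ring

/-- On the flat 2-torus, any purely atomic probability measure `μ = ∑ φᵢ δ_{Xᵢ}` satisfies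
`(∑ φᵢ^{1/2})^{2/3} · (W₂²(μ, dx))^{1/3} ≥ c` for a universal constant `c > 0`
(stated in `ℝ≥0∞` so that a divergent sum of square roots causes no harm). -/
theorem stmt4 :
    ∃ c : ℝ, 0 < c ∧
      ∀ (φ : ℕ → ℝ) (X : ℕ → AddCircle (1 : ℝ) × AddCircle (1 : ℝ)),
        (∀ i, 0 < φ i) → HasSum φ 1 →
        ENNReal.ofReal c ≤
          (∑' i, ENNReal.ofReal (Real.sqrt (φ i))) ^ ((2 : ℝ) / 3) *
            ENNReal.ofReal
              (W2sq (Measure.sum fun i => ENNReal.ofReal (φ i) • Measure.dirac (X i))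
                (volume : Measure (AddCircle (1 : ℝ) × AddCircle (1 : ℝ)))) ^ ((1 : ℝ) / 3) := by
  refine ⟨1/4, by norm_num, ?_⟩
  intro φ X hφ hsum
  set μ : Measure T2 := Measure.sum (fun i => ENNReal.ofReal (φ i) • Measure.dirac (X i)) with hμ
  set S := ∑' i, ENNReal.ofReal (Real.sqrt (φ i)) with hS
  set cs : Set ℝ := {c : ℝ | ∃ π : Measure (T2 × T2), π.map Prod.fst = μ ∧
      π.map Prod.snd = volume ∧ c = ∫ p, dist p.1 p.2 ^ 2 ∂π} with hcs
  have hW : W2sq μ (volume : Measure T2) = sInf cs := rfl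
  have hμuniv : μ univ = 1 := by
    rw [hμ, Measure.sum_apply _ MeasurableSet.univ]
    simp only [Measure.smul_apply, measure_univ, smul_eq_mul, mul_one]
    rw [← ENNReal.ofReal_tsum_of_nonneg (fun i => (hφ i).le) hsum.summable, hsum.tsum_eq]
    norm_num
  haveI : IsFiniteMeasure μ := ⟨by rw [hμuniv]; exact one_lt_top⟩
  have hvol1 : (volume : Measure T2) univ = 1 := by
    rw [← univ_prod_univ, Measure.volume_eq_prod, Measure.prod_prod, AddCircle.measure_univ]
    norm_num
  have hne : cs.Nonempty := by
    refine ⟨_, μ.prod (volume : Measure T2), ?_, ?_, rfl⟩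
    · rw [Measure.map_fst_prod, hvol1, one_smul]
    · rw [Measure.map_snd_prod, hμuniv, one_smul]
  have hper : ∀ c ∈ cs, ENNReal.ofReal (φ 0 ^ 2) ≤ 16 * ENNReal.ofReal c ∧
      1 ≤ 16 * S ^ (2:ℝ) * ENNReal.ofReal c := by
    rintro c ⟨π, h1, h2, h3⟩
    exact coupling_lb φ X hφ hsum π h1 h2 c h3
  have hnn : ∀ c ∈ cs, 0 ≤ c := by
    rintro c ⟨π, h1, h2, h3⟩
    rw [h3]
    exact integral_nonneg fun p => sq_nonneg _
  have hlb0 : φ 0 ^ 2 / 16 ≤ W2sq μ (volume : Measure T2) := by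
    rw [hW]
    refine le_csInf hne fun c hc => ?_
    have h := (hper c hc).1
    have hc0 := hnn c hc
    rw [show (16:ℝ≥0∞) * ENNReal.ofReal c = ENNReal.ofReal (16 * c) by
      rw [ENNReal.ofReal_mul (by norm_num : (0:ℝ) ≤ 16), ENNReal.ofReal_ofNat]] at h
    have h' := (ENNReal.ofReal_le_ofReal_iff (by positivity)).1 h
    linarith
  have hWpos : 0 < W2sq μ (volume : Measure T2) :=
    lt_of_lt_of_le (by have := hφ 0; positivity) hlb0
  by_cases hStop : S = ⊤
  · rw [hStop, ENNReal.top_rpow_of_pos (by norm_num), ENNReal.top_mul ?hne0]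
    · exact le_top
    case hne0 =>
      intro h
      rw [ENNReal.rpow_eq_zero_iff] at h
      rcases h with ⟨h1, _⟩ | ⟨h1, _⟩
      · rw [ENNReal.ofReal_eq_zero] at h1; linarith
      · exact (ENNReal.ofReal_ne_top h1)
  · have hSfin : S ≠ ⊤ := hStop
    have hS1 : (1:ℝ≥0∞) ≤ S := by
      have hφle1 : ∀ i, φ i ≤ 1 := fun i => le_hasSum hsum i fun j _ => (hφ j).le
      have hsq : ∀ i, φ i ≤ Real.sqrt (φ i) := by
        intro i
        nlinarith [Real.sq_sqrt (hφ i).le, Real.sqrt_nonneg (φ i), hφle1 i, hφ i,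
          sq_nonneg (Real.sqrt (φ i) - 1)]
      calc (1:ℝ≥0∞) = ENNReal.ofReal (∑' i, φ i) := by rw [hsum.tsum_eq]; norm_num
        _ = ∑' i, ENNReal.ofReal (φ i) :=
            ENNReal.ofReal_tsum_of_nonneg (fun i => (hφ i).le) hsum.summable
        _ ≤ S := ENNReal.tsum_le_tsum fun i => ENNReal.ofReal_le_ofReal (hsq i)
    set t := S.toReal with ht
    have hSt : S = ENNReal.ofReal t := (ENNReal.ofReal_toReal hSfin).symm
    have ht1 : (1:ℝ) ≤ t := by
      have := ENNReal.toReal_mono hSfin hS1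
      simpa using this
    have ht0 : (0:ℝ) < t := lt_of_lt_of_le one_pos ht1
    have hlb : 1 / (16 * t^2) ≤ W2sq μ (volume : Measure T2) := by
      rw [hW]
      refine le_csInf hne fun c hc => ?_
      have h := (hper c hc).2
      have hc0 := hnn c hc
      rw [hSt] at h
      rw [show (16:ℝ≥0∞) * ENNReal.ofReal t ^ (2:ℝ) * ENNReal.ofReal c
          = ENNReal.ofReal (16 * t^2 * c) by
        rw [ENNReal.ofReal_rpow_of_nonneg ht0.le (by norm_num),
          show t ^ (2:ℝ) = t^(2:ℕ) by rw [show ((2:ℝ)) = ((2:ℕ):ℝ) by norm_num,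
            Real.rpow_natCast],
          ENNReal.ofReal_mul (by positivity : (0:ℝ) ≤ 16*t^2),
          ENNReal.ofReal_mul (by norm_num : (0:ℝ) ≤ 16),
          ENNReal.ofReal_ofNat]] at h
      have h' := ENNReal.one_le_ofReal.1 h
      rw [div_le_iff₀ (by positivity)]
      nlinarith
    -- now the main estimate
    have hSne0 : S ≠ 0 := by
      intro h
      rw [h] at hS1
      simp at hS1
    have hS2ne0 : S ^ (2:ℝ) ≠ 0 := by
      simp [ENNReal.rpow_eq_zero_iff, hSne0, hSfin]
    have hS2fin : S ^ (2:ℝ) ≠ ⊤ := by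
      simp [ENNReal.rpow_eq_top_iff, hSne0, hSfin]
    set W := ENNReal.ofReal (W2sq μ (volume : Measure T2)) with hWdef
    rw [← ENNReal.rpow_le_rpow_iff (show (0:ℝ) < 3 by norm_num),
      ENNReal.mul_rpow_of_nonneg _ _ (by norm_num : (0:ℝ) ≤ 3),
      ← ENNReal.rpow_mul, ← ENNReal.rpow_mul,
      show (2:ℝ)/3*3 = (2:ℝ) by norm_num, show (1:ℝ)/3*3 = (1:ℝ) by norm_num,
      ENNReal.rpow_one]
    have hWge : (16 * S ^ (2:ℝ))⁻¹ ≤ W := by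
      have h1 : ENNReal.ofReal (1/(16*t^2)) ≤ W := ENNReal.ofReal_le_ofReal hlb
      refine le_trans (le_of_eq ?_) h1
      rw [one_div, ENNReal.ofReal_inv_of_pos (by positivity)]
      congr 1
      rw [ENNReal.ofReal_mul (by norm_num : (0:ℝ) ≤ 16), ENNReal.ofReal_ofNat]
      congr 1
      rw [show t^2 = t ^ ((2:ℕ):ℝ) by rw [Real.rpow_natCast],
        ← ENNReal.ofReal_rpow_of_nonneg ht0.le (by positivity), ← hSt]
      norm_num
    have hid : S ^ (2:ℝ) * (16 * S ^ (2:ℝ))⁻¹ = 16⁻¹ := by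
      rw [ENNReal.mul_inv (Or.inl (by norm_num)) (Or.inl (by norm_num)),
        mul_comm ((16:ℝ≥0∞)⁻¹) _, ← mul_assoc, ENNReal.mul_inv_cancel hS2ne0 hS2fin, one_mul]
    calc ENNReal.ofReal (1/4) ^ (3:ℝ) = ENNReal.ofReal ((1/4)^(3:ℕ)) := by
          rw [ENNReal.ofReal_rpow_of_nonneg (by norm_num) (by norm_num),
            show ((3:ℝ)) = ((3:ℕ):ℝ) by norm_num, Real.rpow_natCast]
      _ ≤ (16:ℝ≥0∞)⁻¹ := by
          rw [show ((16:ℝ≥0∞))⁻¹ = ENNReal.ofReal (1/16) by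
            rw [one_div, ENNReal.ofReal_inv_of_pos (by norm_num), ENNReal.ofReal_ofNat]]
          exact ENNReal.ofReal_le_ofReal (by norm_num)
      _ = S ^ (2:ℝ) * (16 * S ^ (2:ℝ))⁻¹ := hid.symm
      _ ≤ S ^ (2:ℝ) * W := mul_le_mul_right hWge _
end

section
/- Let $X : (a,b) \to \mathbb{R}^2$ be Lipschitz, $\phi > 0$, $r > 0$, and define the vector field $B : \mathbb{R}^2 \times (a,b) \to \mathbb{R}^3$ by $B_3(x', x_3) = \chi_{B'(X(x_3), r)}(x')$ and $B'(x', x_3) = B_3(x', x_3)\dot{X}(x_3)$. Then $\mathrm{div}\, B = 0$ in the sense of distributions on $\mathbb{R}^2 \times (a,b)$. -/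
open MeasureTheory Set Filter Topology

/-- The integral of the a.e. derivative of a compactly supported Lipschitz function
on `ℝ` vanishes. -/
lemma lemA (g g' : ℝ → ℝ) (K : NNReal) (hg : LipschitzWith K g)
    (hsupp : HasCompactSupport g) (hg' : ∀ᵐ z, HasDerivAt g (g' z) z) :
    ∫ z, g' z = 0 := by
  obtain ⟨R, hR⟩ : ∃ R, tsupport g ⊆ Metric.closedBall 0 R :=
    hsupp.isBounded.subset_closedBall 0
  set F : ℕ → ℝ → ℝ := fun n z => (g (z + ((n : ℝ) + 1)⁻¹) - g z) * ((n : ℝ) + 1) with hF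
  have hn0 : ∀ n : ℕ, (0 : ℝ) < ((n : ℝ) + 1)⁻¹ := fun n => by positivity
  have hn1 : ∀ n : ℕ, ((n : ℝ) + 1)⁻¹ ≤ 1 := fun n => by
    rw [inv_le_one_iff₀]; right; linarith [Nat.cast_nonneg (α := ℝ) n]
  have hgint : Integrable g := hg.continuous.integrable_of_hasCompactSupport hsupp
  have hFint : ∀ n, ∫ z, F n z = 0 := by
    intro n
    have : ∫ z, (g (z + ((n : ℝ) + 1)⁻¹) - g z) = 0 := by
      rw [integral_sub (hgint.comp_add_right _) hgint,
        integral_add_right_eq_self g (((n : ℝ) + 1)⁻¹), sub_self]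
    rw [hF]
    simp only [integral_mul_const, this, zero_mul]
  have key : Tendsto (fun n => ∫ z, F n z) atTop (𝓝 (∫ z, g' z)) := by
    apply tendsto_integral_of_dominated_convergence
      ((Icc (-R - 1) (R + 1)).indicator fun _ => (K : ℝ))
    · intro n
      exact ((hg.continuous.comp (continuous_id.add continuous_const)).sub
        hg.continuous).mul continuous_const |>.aestronglyMeasurable
    · exact (integrable_indicator_iff measurableSet_Icc).2 <|
        integrableOn_const measure_Icc_lt_top.ne
    · intro n
      filter_upwards with z
      by_cases hz : z ∈ Icc (-R - 1) (R + 1)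
      · rw [indicator_of_mem hz]
        have h1 : |g (z + ((n : ℝ) + 1)⁻¹) - g z| ≤ (K : ℝ) * ((n : ℝ) + 1)⁻¹ := by
          have := hg.dist_le_mul (z + ((n : ℝ) + 1)⁻¹) z
          simpa [Real.dist_eq, abs_of_pos (show (0:ℝ) < (n:ℝ)+1 by positivity)] using this
        have : ‖F n z‖ ≤ ((K : ℝ) * ((n : ℝ) + 1)⁻¹) * ((n : ℝ) + 1) := by
          rw [hF]; simp only [norm_mul, Real.norm_eq_abs,
            abs_of_pos (show (0:ℝ) < (n:ℝ)+1 by positivity)]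
          exact mul_le_mul_of_nonneg_right h1 (by positivity)
        rw [mul_assoc, inv_mul_cancel₀ (by positivity), mul_one] at this
        exact this
      · rw [indicator_of_notMem hz]
        have hzR : g z = 0 := by
          apply image_eq_zero_of_notMem_tsupport
          intro hmem
          have := hR hmem
          simp only [Metric.mem_closedBall, Real.dist_eq, sub_zero] at this
          rcases abs_le.1 this with ⟨h1, h2⟩
          exact hz ⟨by linarith, by linarith⟩
        have hzR2 : g (z + ((n : ℝ) + 1)⁻¹) = 0 := by
          apply image_eq_zero_of_notMem_tsupport
          intro hmem
          have := hR hmem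
          simp only [Metric.mem_closedBall, Real.dist_eq, sub_zero] at this
          rcases abs_le.1 this with ⟨h1, h2⟩
          have := hn0 n; have := hn1 n
          exact hz ⟨by linarith, by linarith⟩
        simp [hF, hzR, hzR2]
    · filter_upwards [hg'] with z hz
      have hslope := hasDerivAt_iff_tendsto_slope.1 hz
      have hseq : Tendsto (fun n : ℕ => z + ((n : ℝ) + 1)⁻¹) atTop (𝓝[≠] z) := by
        apply tendsto_nhdsWithin_of_tendsto_nhds_of_eventually_within
        · have : Tendsto (fun n : ℕ => ((n : ℝ) + 1)⁻¹) atTop (𝓝 0) :=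
            tendsto_one_div_add_atTop_nhds_zero_nat.congr (by intro n; rw [one_div])
          simpa using tendsto_const_nhds.add this
        · filter_upwards with n
          simp only [mem_compl_iff, mem_singleton_iff]
          intro h
          nlinarith [hn0 n, congrArg (· - z) h]
      have := hslope.comp hseq
      apply this.congr
      intro n
      simp only [Function.comp_apply, slope_def_field, hF]
      rw [add_sub_cancel_left, div_inv_eq_mul]
  exact tendsto_nhds_unique key
    (by simp only [hFint] ; exact tendsto_const_nhds)

/-- The magnetic field of a moving disk of flux: if `B₃(x', x₃) = χ_{B'(X(x₃), r)}(x')`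
and `B'(x', x₃) = B₃(x', x₃) Ẋ(x₃)` for a Lipschitz curve `X`, then `div B = 0` in the
sense of distributions on `ℝ² × (a,b)`: that is, `∫ (B₃ ∂₃ψ + B' · ∇'ψ) dx = 0` for
every `ψ ∈ C¹_c(ℝ² × (a,b))`. -/
theorem stmt15 (a b : ℝ) (hab : a < b) (r : ℝ) (hr : 0 < r) (φ : ℝ) (hφ : 0 < φ)
    (X : ℝ → ℝ × ℝ) (L : NNReal) (hX : LipschitzWith L X)
    (X' : ℝ → ℝ × ℝ) (hX' : ∀ᵐ z : ℝ, HasDerivAt X (X' z) z)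
    (ψ : (ℝ × ℝ) × ℝ → ℝ) (hψ : ContDiff ℝ 1 ψ) (hψc : HasCompactSupport ψ)
    (hψz : ∀ (x' : ℝ × ℝ) (z : ℝ), z ∉ Ioo a b → ψ (x', z) = 0) :
    ∫ x : (ℝ × ℝ) × ℝ,
      (if (x.1.1 - (X x.2).1) ^ 2 + (x.1.2 - (X x.2).2) ^ 2 < r ^ 2 then (1 : ℝ) else 0) *
        (fderiv ℝ ψ x ((0 : ℝ × ℝ), 1) + fderiv ℝ ψ x (X' x.2, 0)) = 0 := by
  classical
  have hψdiff : Differentiable ℝ ψ := hψ.differentiable one_ne_zero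
  set F : (ℝ × ℝ) × ℝ → ℝ := fun x =>
    (if (x.1.1 - (X x.2).1) ^ 2 + (x.1.2 - (X x.2).2) ^ 2 < r ^ 2 then (1 : ℝ) else 0) *
      (fderiv ℝ ψ x ((0 : ℝ × ℝ), 1) + fderiv ℝ ψ x (X' x.2, 0)) with hFdef
  set G : (ℝ × ℝ) → ℝ → ℝ := fun y' z =>
    (if y'.1 ^ 2 + y'.2 ^ 2 < r ^ 2 then (1 : ℝ) else 0) *
      (fderiv ℝ ψ (y' + X z, z) ((0 : ℝ × ℝ), 1) + fderiv ℝ ψ (y' + X z, z) (X' z, 0))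
    with hGdef
  show ∫ x, F x = 0
  have hXc : Continuous X := hX.continuous
  have hDψcont : Continuous (fderiv ℝ ψ) := hψ.continuous_fderiv one_ne_zero
  obtain ⟨M, hM⟩ := (hψc.fderiv (𝕜 := ℝ)).exists_bound_of_continuous hDψcont
  have hM0 : (0 : ℝ) ≤ M := le_trans (norm_nonneg _) (hM 0)
  have hD : Measurable (deriv X) := measurable_deriv X
  have hXD : ∀ᵐ z : ℝ, X' z = deriv X z ∧ ‖X' z‖ ≤ (L : ℝ) := by
    filter_upwards [hX'] with z hz
    exact ⟨hz.deriv.symm, hz.le_of_lipschitz hX⟩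
  have heval : Continuous fun p : ((((ℝ × ℝ) × ℝ) →L[ℝ] ℝ) × ((ℝ × ℝ) × ℝ)) => p.1 p.2 :=
    isBoundedBilinearMap_apply.continuous
  have hv1 : ‖(((0 : ℝ × ℝ), (1 : ℝ)) : (ℝ × ℝ) × ℝ)‖ = 1 := by
    simp [Prod.norm_def]
  have hv2 : ∀ v : ℝ × ℝ, ‖((v, (0 : ℝ)) : (ℝ × ℝ) × ℝ)‖ = ‖v‖ := fun v => by
    simp [Prod.norm_def, le_max_iff, norm_nonneg]
  -- fderiv ψ vanishes when the last coordinate is outside [a, b]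
  have hfz : ∀ q : (ℝ × ℝ) × ℝ, q.2 ∉ Icc a b → fderiv ℝ ψ q = 0 := by
    intro q hq
    have hopen : IsOpen {w : (ℝ × ℝ) × ℝ | w.2 < a ∨ b < w.2} :=
      (isOpen_lt continuous_snd continuous_const).union
        (isOpen_lt continuous_const continuous_snd)
    have hqmem : q ∈ {w : (ℝ × ℝ) × ℝ | w.2 < a ∨ b < w.2} := by
      simp only [mem_Icc, not_and_or, not_le] at hq
      simpa using hq
    have hev : ψ =ᶠ[𝓝 q] (fun _ => (0 : ℝ)) := by
      filter_upwards [hopen.mem_nhds hqmem] with w hw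
      have : w.2 ∉ Ioo a b := by
        rcases hw with h | h
        · exact fun hm => absurd hm.1 (not_lt.2 h.le)
        · exact fun hm => absurd hm.2 (not_lt.2 h.le)
      simpa using hψz w.1 w.2 this
    rw [hev.fderiv_eq, fderiv_const_apply]
  have hFint : Integrable F ((volume : Measure (ℝ × ℝ)).prod (volume : Measure ℝ)) := by
    have hae := (Measure.quasiMeasurePreserving_snd
      (μ := (volume : Measure (ℝ × ℝ))) (ν := (volume : Measure ℝ))).ae hXD
    apply Integrable.mono'
      (g := (tsupport (fderiv ℝ ψ)).indicator fun _ => M + M * (L : ℝ))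
      ((integrable_indicator_iff (isClosed_tsupport _).measurableSet).2
        (integrableOn_const (hψc.fderiv (𝕜 := ℝ)).isCompact.measure_lt_top.ne))
    · have hmeas : AEStronglyMeasurable (fun x : (ℝ × ℝ) × ℝ =>
          (if (x.1.1 - (X x.2).1) ^ 2 + (x.1.2 - (X x.2).2) ^ 2 < r ^ 2 then (1 : ℝ) else 0) *
            (fderiv ℝ ψ x ((0 : ℝ × ℝ), 1) + fderiv ℝ ψ x (deriv X x.2, 0)))
          ((volume : Measure (ℝ × ℝ)).prod (volume : Measure ℝ)) := by
        apply Measurable.aestronglyMeasurable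
        apply Measurable.mul
        · refine Measurable.ite ?_ measurable_const measurable_const
          refine measurableSet_lt ?_ measurable_const
          have : Continuous fun x : (ℝ × ℝ) × ℝ =>
              (x.1.1 - (X x.2).1) ^ 2 + (x.1.2 - (X x.2).2) ^ 2 := by fun_prop
          exact this.measurable
        · apply Measurable.add
          · exact (heval.comp (hDψcont.prodMk continuous_const)).measurable
          · exact heval.measurable.comp (hDψcont.measurable.prodMk
              (((hD.comp measurable_snd)).prodMk measurable_const))
      apply hmeas.congr
      filter_upwards [hae] with x hx
      rw [hFdef, ← hx.1]
    · filter_upwards [hae] with x hx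
      by_cases hxK : x ∈ tsupport (fderiv ℝ ψ)
      · rw [indicator_of_mem hxK]
        have h1 : ‖F x‖ ≤ 1 * (‖fderiv ℝ ψ x ((0 : ℝ × ℝ), 1)‖
            + ‖fderiv ℝ ψ x (X' x.2, 0)‖) := by
          rw [hFdef]
          simp only [norm_mul]
          apply mul_le_mul _ (norm_add_le _ _) (norm_nonneg _) zero_le_one
          split_ifs <;> simp
        have h2 : ‖fderiv ℝ ψ x ((0 : ℝ × ℝ), 1)‖ ≤ M := by
          calc ‖fderiv ℝ ψ x ((0 : ℝ × ℝ), 1)‖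
              ≤ ‖fderiv ℝ ψ x‖ * ‖(((0 : ℝ × ℝ), (1 : ℝ)) : (ℝ × ℝ) × ℝ)‖ :=
                (fderiv ℝ ψ x).le_opNorm _
            _ ≤ M := by rw [hv1, mul_one]; exact hM x
        have h3 : ‖fderiv ℝ ψ x (X' x.2, 0)‖ ≤ M * (L : ℝ) := by
          calc ‖fderiv ℝ ψ x (X' x.2, 0)‖
              ≤ ‖fderiv ℝ ψ x‖ * ‖((X' x.2, (0 : ℝ)) : (ℝ × ℝ) × ℝ)‖ :=
                (fderiv ℝ ψ x).le_opNorm _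
            _ ≤ M * (L : ℝ) := by
                rw [hv2]
                exact mul_le_mul (hM x) hx.2 (norm_nonneg _) hM0
        calc ‖F x‖ ≤ 1 * (‖fderiv ℝ ψ x ((0 : ℝ × ℝ), 1)‖ + ‖fderiv ℝ ψ x (X' x.2, 0)‖) := h1
          _ ≤ M + M * (L : ℝ) := by rw [one_mul]; exact add_le_add h2 h3
      · rw [indicator_of_notMem hxK]
        have h0 : fderiv ℝ ψ x = 0 := image_eq_zero_of_notMem_tsupport hxK
        rw [hFdef]
        simp [h0]
  have hHint : Integrable (Function.uncurry fun z y' => G y' z)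
      ((volume : Measure ℝ).prod (volume : Measure (ℝ × ℝ))) := by
    have hae := (Measure.quasiMeasurePreserving_fst
      (μ := (volume : Measure ℝ)) (ν := (volume : Measure (ℝ × ℝ)))).ae hXD
    set K₂ : Set (ℝ × (ℝ × ℝ)) := Icc a b ×ˢ Metric.closedBall (0 : ℝ × ℝ) r with hK₂
    have hK₂c : IsCompact K₂ := isCompact_Icc.prod (isCompact_closedBall _ _)
    apply Integrable.mono' (g := K₂.indicator fun _ => M + M * (L : ℝ))
      ((integrable_indicator_iff (measurableSet_Icc.prod measurableSet_closedBall)).2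
        (integrableOn_const hK₂c.measure_lt_top.ne))
    · have hmeas : AEStronglyMeasurable (fun p : ℝ × (ℝ × ℝ) =>
          (if p.2.1 ^ 2 + p.2.2 ^ 2 < r ^ 2 then (1 : ℝ) else 0) *
            (fderiv ℝ ψ (p.2 + X p.1, p.1) ((0 : ℝ × ℝ), 1)
              + fderiv ℝ ψ (p.2 + X p.1, p.1) (deriv X p.1, 0)))
          ((volume : Measure ℝ).prod (volume : Measure (ℝ × ℝ))) := by
        have hptc : Continuous fun p : ℝ × (ℝ × ℝ) => ((p.2 + X p.1, p.1) : (ℝ × ℝ) × ℝ) := by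
          fun_prop
        apply Measurable.aestronglyMeasurable
        apply Measurable.mul
        · refine Measurable.ite ?_ measurable_const measurable_const
          refine measurableSet_lt ?_ measurable_const
          have : Continuous fun p : ℝ × (ℝ × ℝ) => p.2.1 ^ 2 + p.2.2 ^ 2 := by fun_prop
          exact this.measurable
        · apply Measurable.add
          · exact (heval.comp ((hDψcont.comp hptc).prodMk continuous_const)).measurable
          · exact heval.measurable.comp ((hDψcont.comp hptc).measurable.prodMk
              (((hD.comp measurable_fst)).prodMk measurable_const))
      apply hmeas.congr
      filter_upwards [hae] with p hp
      rw [Function.uncurry, hGdef]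
      simp only [← hp.1]
    · filter_upwards [hae] with p hp
      have huncurry : (Function.uncurry fun z y' => G y' z) p = G p.2 p.1 := rfl
      by_cases hpK : p ∈ K₂
      · rw [indicator_of_mem hpK, huncurry]
        have h1 : ‖G p.2 p.1‖ ≤ 1 * (‖fderiv ℝ ψ (p.2 + X p.1, p.1) ((0 : ℝ × ℝ), 1)‖
            + ‖fderiv ℝ ψ (p.2 + X p.1, p.1) (X' p.1, 0)‖) := by
          rw [hGdef]
          simp only [norm_mul]
          apply mul_le_mul _ (norm_add_le _ _) (norm_nonneg _) zero_le_one
          split_ifs <;> simp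
        have h2 : ‖fderiv ℝ ψ (p.2 + X p.1, p.1) ((0 : ℝ × ℝ), 1)‖ ≤ M := by
          calc ‖fderiv ℝ ψ (p.2 + X p.1, p.1) ((0 : ℝ × ℝ), 1)‖
              ≤ ‖fderiv ℝ ψ (p.2 + X p.1, p.1)‖ * ‖(((0 : ℝ × ℝ), (1 : ℝ)) : (ℝ × ℝ) × ℝ)‖ :=
                (fderiv ℝ ψ _).le_opNorm _
            _ ≤ M := by rw [hv1, mul_one]; exact hM _
        have h3 : ‖fderiv ℝ ψ (p.2 + X p.1, p.1) (X' p.1, 0)‖ ≤ M * (L : ℝ) := by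
          calc ‖fderiv ℝ ψ (p.2 + X p.1, p.1) (X' p.1, 0)‖
              ≤ ‖fderiv ℝ ψ (p.2 + X p.1, p.1)‖ * ‖((X' p.1, (0 : ℝ)) : (ℝ × ℝ) × ℝ)‖ :=
                (fderiv ℝ ψ _).le_opNorm _
            _ ≤ M * (L : ℝ) := by
                rw [hv2]
                exact mul_le_mul (hM _) hp.2 (norm_nonneg _) hM0
        calc ‖G p.2 p.1‖ ≤ 1 * (‖fderiv ℝ ψ (p.2 + X p.1, p.1) ((0 : ℝ × ℝ), 1)‖
              + ‖fderiv ℝ ψ (p.2 + X p.1, p.1) (X' p.1, 0)‖) := h1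
          _ ≤ M + M * (L : ℝ) := by rw [one_mul]; exact add_le_add h2 h3
      · rw [indicator_of_notMem hpK, huncurry]
        rw [hK₂, mem_prod, not_and_or] at hpK
        rcases hpK with hp1 | hp2
        · have h0 : fderiv ℝ ψ (p.2 + X p.1, p.1) = 0 := hfz _ hp1
          rw [hGdef]
          simp [h0]
        · have hcond : ¬ (p.2.1 ^ 2 + p.2.2 ^ 2 < r ^ 2) := by
            intro hc
            apply hp2
            rw [Metric.mem_closedBall, dist_zero_right, Prod.norm_def]
            have h1 : |p.2.1| ≤ r := by nlinarith [sq_nonneg p.2.2, abs_nonneg p.2.1, sq_abs p.2.1]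
            have h2 : |p.2.2| ≤ r := by nlinarith [sq_nonneg p.2.1, abs_nonneg p.2.2, sq_abs p.2.2]
            exact max_le h1 h2
          rw [hGdef]
          simp [hcond]
  have step1 : ∫ x, F x = ∫ z, ∫ x', F (x', z) := by
    rw [Measure.volume_eq_prod]
    exact integral_prod_symm F hFint
  have step2 : ∀ z, ∫ x', F (x', z) = ∫ y', G y' z := by
    intro z
    rw [← integral_add_right_eq_self (fun x' => F (x', z)) (X z)]
    congr 1
    ext y'
    simp only [hFdef, hGdef, Prod.fst_add, Prod.snd_add, add_sub_cancel_right]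
  have step3 : ∀ y' : ℝ × ℝ, (∫ z, (fderiv ℝ ψ (y' + X z, z) ((0 : ℝ × ℝ), 1)
      + fderiv ℝ ψ (y' + X z, z) (X' z, 0))) = 0 := by
    intro y'
    obtain ⟨K₁, hK₁⟩ := hψ.lipschitzWith_of_hasCompactSupport hψc one_ne_zero
    set g : ℝ → ℝ := fun z => ψ (y' + X z, z) with hgdef
    have hgl : LipschitzWith (K₁ * max (1 * L) 1) g :=
      hK₁.comp ((((isometry_add_left y').lipschitz).comp hX).prodMk LipschitzWith.id)
    have hgsupp : HasCompactSupport g := by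
      apply HasCompactSupport.intro (isCompact_Icc (a := a) (b := b))
      intro z hz
      exact hψz _ z (fun h => hz ⟨le_of_lt h.1, le_of_lt h.2⟩)
    apply lemA g _ _ hgl hgsupp
    filter_upwards [hX'] with z hz
    have hu : HasDerivAt (fun z : ℝ => ((y' + X z, z) : (ℝ × ℝ) × ℝ)) (X' z, 1) z :=
      (hz.const_add y').prodMk (hasDerivAt_id z)
    have hd := HasFDerivAt.comp_hasDerivAt (f := fun z : ℝ => ((y' + X z, z) : (ℝ × ℝ) × ℝ))
      z (hψdiff (y' + X z, z)).hasFDerivAt hu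
    have : fderiv ℝ ψ (y' + X z, z) (X' z, 1)
        = fderiv ℝ ψ (y' + X z, z) ((0 : ℝ × ℝ), 1) + fderiv ℝ ψ (y' + X z, z) (X' z, 0) := by
      rw [← map_add]
      norm_num
    rw [this] at hd
    exact hd
  calc ∫ x, F x = ∫ z, ∫ x', F (x', z) := step1
    _ = ∫ z, ∫ y', G y' z := by simp only [step2]
    _ = ∫ y', ∫ z, G y' z := integral_integral_swap hHint
    _ = 0 := by
      simp only [hGdef, integral_const_mul, step3, mul_zero, integral_zero]
end
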